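/- arXiv:1802.01973 — 2 statements merged into one kernel-verified Lean document; each statement's English description precedes it below -/
import Mathlib

section
/- Let W ∈ L(H) be a positive operator, S ⊆ H a closed subspace, and T the shorted operator of W to S. Then T is also the shorted operator of W to the closed subspace ker T, i.e. T ∈ M(W, ker T) and X ≤ T for every X ∈ M(W, ker T). -/
open ContinuousLinearMap
open scoped ComplexInnerProductSpace

noncomputable section

variable {H : Type*} [NormedAddCommGroup H] [InnerProductSpace ℂ H] [CompleteSpace H]

/-- `M(W,S)`: the set of operators `X` with `0 ≤ X ≤ W` (Loewner order) and `range X ⊆ S^⊥`. -/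
def MSet (W : H →L[ℂ] H) (S : Submodule ℂ H) : Set (H →L[ℂ] H) :=
  {X | X.IsPositive ∧ (W - X).IsPositive ∧ LinearMap.range X.toLinearMap ≤ Sᗮ}

/-- `T` is the shorted operator of `W` to `S`, i.e. the maximum of `M(W,S)` in the Loewner
order. -/
def IsShorted (W : H →L[ℂ] H) (S : Submodule ℂ H) (T : H →L[ℂ] H) : Prop :=
  T ∈ MSet W S ∧ ∀ X ∈ MSet W S, (T - X).IsPositive

/-- The minus order: `A ⁻≤ B` iff there are bounded idempotents `P, Q` with `A = PB` and
`A* = QB*`. -/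
def MinusLE (A B : H →L[ℂ] H) : Prop :=
  ∃ P Q : H →L[ℂ] H, IsIdempotentElem P ∧ IsIdempotentElem Q ∧
    A = P ∘L B ∧ adjoint A = Q ∘L adjoint B

/-- The pair `(W, N)` is compatible: there is a bounded idempotent `Q` with range `N` such that
`WQ` is selfadjoint. -/
def Compatible (W : H →L[ℂ] H) (N : Submodule ℂ H) : Prop :=
  ∃ Q : H →L[ℂ] H, IsIdempotentElem Q ∧ LinearMap.range Q.toLinearMap = N ∧ IsSelfAdjoint (W ∘L Q)

/-- `M⁻(W,S)`: operators `X` with `X ⁻≤ W`, `range X ⊆ S^⊥` and `range X* ⊆ S^⊥`. -/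
def MMinusSet (W : H →L[ℂ] H) (S : Submodule ℂ H) : Set (H →L[ℂ] H) :=
  {X | MinusLE X W ∧ LinearMap.range X.toLinearMap ≤ Sᗮ ∧ LinearMap.range (adjoint X).toLinearMap ≤ Sᗮ}

/-- `X₀` is a `W`-inverse of `M` in `R(C)`: for every `x`, `X₀ x` is a `W`-weighted least squares
solution of `M z = C x`. -/
def WInverseIn (W M C X₀ : H →L[ℂ] H) : Prop :=
  ∀ x z : H, (⟪W (M (X₀ x) - C x), M (X₀ x) - C x⟫).re ≤ (⟪W (M z - C x), M z - C x⟫).re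

/-- The left weighted star order `A ₋*_W≤ B`. -/
def LStarW (W A B : H →L[ℂ] H) : Prop :=
  LinearMap.range B.toLinearMap = LinearMap.range A.toLinearMap ⊔ LinearMap.range (B - A).toLinearMap ∧
  LinearMap.range A.toLinearMap ⊓ LinearMap.range (B - A).toLinearMap = ⊥ ∧
  LinearMap.range (B - A).toLinearMap ≤ LinearMap.ker (adjoint A ∘L W).toLinearMap

/-- The right weighted star order `A ≤*_W B`. -/
def RStarW (W A B : H →L[ℂ] H) : Prop :=
  LinearMap.range (adjoint B).toLinearMap =
    LinearMap.range (adjoint A).toLinearMap ⊔ LinearMap.range (adjoint B - adjoint A).toLinearMap ∧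
  LinearMap.range (adjoint A).toLinearMap ⊓ LinearMap.range (adjoint B - adjoint A).toLinearMap = ⊥ ∧
  LinearMap.range (adjoint B - adjoint A).toLinearMap ≤ LinearMap.ker (A ∘L W).toLinearMap

/-- The weighted star order `A *_W≤ B`. -/
def StarW (W A B : H →L[ℂ] H) : Prop :=
  LStarW W A B ∧ RStarW W A B


lemma aux_pos_apply_eq_zero {T : H →L[ℂ] H} (hT : T.IsPositive) {s : H}
    (hs : ⟪T s, s⟫ = 0) : T s = 0 := by
  have hadj : adjoint T = T := hT.isSelfAdjoint
  set c : PreInnerProductSpace.Core ℂ H :=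
    { inner := fun x y => ⟪T x, y⟫
      conj_inner_symm := fun x y => by
        rw [inner_conj_symm, ← adjoint_inner_left, hadj]
      re_inner_nonneg := fun x => (RCLike.nonneg_iff.mp (hT.inner_nonneg_left x)).1
      add_left := fun x y z => by simp [inner_add_left]
      smul_left := fun x y r => by simp [inner_smul_left]; ring }
  have key : ∀ y : H, ⟪T s, y⟫ = 0 := by
    intro y
    have h := @InnerProductSpace.Core.inner_mul_inner_self_le ℂ H _ _ _ c s y
    have hre : RCLike.re (c.inner s s) = 0 := by
      show RCLike.re (⟪T s, s⟫) = 0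
      rw [hs]; simp
    have h2 : ‖c.inner s y‖ * ‖c.inner y s‖ ≤ 0 := by
      calc ‖c.inner s y‖ * ‖c.inner y s‖ ≤ RCLike.re (c.inner s s) * RCLike.re (c.inner y y) := h
      _ = 0 := by rw [hre, zero_mul]
    have hnorm : ‖c.inner y s‖ = ‖c.inner s y‖ := by
      rw [← c.conj_inner_symm s y, RCLike.norm_conj]
    rw [hnorm, ← sq] at h2
    have : ‖c.inner s y‖ = 0 := by nlinarith [norm_nonneg (c.inner s y)]
    exact norm_eq_zero.mp this
  have := key (T s)
  rwa [inner_self_eq_zero] at this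

/-- the shorted operator of `W` to `S` is also the shorted operator of `W` to
`ker T`. -/
theorem stmt1 (W T : H →L[ℂ] H) (S : Submodule ℂ H) (hS : IsClosed (S : Set H))
    (hW : W.IsPositive) (hT : IsShorted W S T) :
    IsShorted W (LinearMap.ker T.toLinearMap) T := by
  obtain ⟨⟨hTpos, hWT, hrange⟩, hmax⟩ := hT
  have hadj : adjoint T = T := hTpos.isSelfAdjoint
  have hSker : S ≤ LinearMap.ker T.toLinearMap := by
    intro s hsS
    have hTs : T s ∈ Sᗮ := hrange ⟨s, rfl⟩
    have h0 : ⟪T s, s⟫ = 0 := by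
      have h1 : ⟪s, T s⟫ = 0 := (Submodule.mem_orthogonal _ _).mp hTs s hsS
      rw [← inner_conj_symm, h1, map_zero]
    exact aux_pos_apply_eq_zero hTpos h0
  refine ⟨⟨hTpos, hWT, ?_⟩, ?_⟩
  · rintro _ ⟨x, rfl⟩
    rw [Submodule.mem_orthogonal]
    intro u hu
    have hu0 : T u = 0 := hu
    calc ⟪u, T x⟫ = ⟪adjoint T u, x⟫ := (adjoint_inner_left T x u).symm
    _ = 0 := by rw [hadj, hu0, inner_zero_left]
  · rintro X ⟨h1, h2, h3⟩
    exact hmax X ⟨h1, h2, h3.trans (Submodule.orthogonal_le hSker)⟩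
end
end

section
/- Let W ∈ L(H) be a positive operator, A, B ∈ L(H) such that range(A + B) is closed, the pair (W, range(A + B)) is compatible, and A ₋*_W≤ A + B, and let C ∈ L(H). Then, for X₀ ∈ L(H): X₀ is a W-inverse of A + B in R(C) if and only if X₀ is a W-inverse of A in R(C) and a W-inverse of B in R(C). -/
open ContinuousLinearMap
open scoped ComplexInnerProductSpace

noncomputable section

variable {H : Type*} [NormedAddCommGroup H] [InnerProductSpace ℂ H] [CompleteSpace H]

private lemma wsym (W : H →L[ℂ] H) (hW : W.IsPositive) (x y : H) :
    ⟪W x, y⟫ = ⟪x, W y⟫ := by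
  nth_rewrite 1 [← hW.isSelfAdjoint.adjoint_eq]
  exact adjoint_inner_left W y x

private lemma winv_char (W M C X₀ : H →L[ℂ] H) (hW : W.IsPositive) :
    WInverseIn W M C X₀ ↔ ∀ x, adjoint M (W (M (X₀ x) - C x)) = 0 := by
  constructor
  · intro h x
    set r := M (X₀ x) - C x with hr
    apply ext_inner_right ℂ
    intro v
    rw [adjoint_inner_left, inner_zero_left]
    set c := (⟪W r, M v⟫ : ℂ) with hc
    set q := (⟪W (M v), M v⟫ : ℂ).re with hq
    have hq0 : 0 ≤ q := hW.re_inner_nonneg_left (M v)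
    have hsym : (⟪W (M v), r⟫ : ℂ) = starRingEnd ℂ c := by
      rw [hc, wsym W hW, ← inner_conj_symm]
    have key : ∀ t : ℂ, 0 ≤ 2 * (t * c).re + Complex.normSq t * q := by
      intro t
      have h1 : M (X₀ x + t • v) - C x = r + t • M v := by
        rw [map_add, map_smul, hr]; abel
      have h2 := h x (X₀ x + t • v)
      rw [h1, ← hr] at h2
      have expand : (⟪W (r + t • M v), r + t • M v⟫ : ℂ)
          = ⟪W r, r⟫ + t * c + starRingEnd ℂ (t * c)
            + (Complex.normSq t : ℂ) * ⟪W (M v), M v⟫ := by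
        rw [map_add, map_smul, inner_add_left, inner_add_right, inner_add_right,
          inner_smul_left, inner_smul_right, inner_smul_left, inner_smul_right,
          hsym, ← hc, map_mul, Complex.normSq_eq_conj_mul_self]
        ring
      rw [expand] at h2
      simp only [Complex.add_re, Complex.conj_re, Complex.re_ofReal_mul] at h2
      linarith
    have := key (-(1 / ((q : ℂ) + 1)) * starRingEnd ℂ c)
    set nc := Complex.normSq c with hnc
    have hnc0 : 0 ≤ nc := Complex.normSq_nonneg c
    have e1 : ((-(1 / ((q : ℂ) + 1)) * starRingEnd ℂ c) * c).re = -(1 / (q + 1)) * nc := by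
      have h3 : (-(1 / ((q : ℂ) + 1)) * starRingEnd ℂ c) * c
          = ((-(1 / (q + 1)) * nc : ℝ) : ℂ) := by
        rw [hnc]
        push_cast
        rw [Complex.normSq_eq_conj_mul_self]
        ring
      rw [h3, Complex.ofReal_re]
    have e2 : Complex.normSq (-(1 / ((q : ℂ) + 1)) * starRingEnd ℂ c)
        = (1 / (q + 1)) ^ 2 * nc := by
      rw [Complex.normSq_mul, Complex.normSq_conj, ← hnc]
      have h4 : (-(1 / ((q : ℂ) + 1))) = ((-(1 / (q + 1)) : ℝ) : ℂ) := by push_cast; ring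
      rw [h4, Complex.normSq_ofReal]
      ring
    rw [e1, e2] at this
    have hq1 : (0:ℝ) < q + 1 := by linarith
    have hnc1 : nc ≤ 0 := by
      by_contra hpos
      push_neg at hpos
      set s := (1 : ℝ) / (q + 1) with hsdef
      have hspos : 0 < s := by positivity
      have hsq : s * q = 1 - s := by
        rw [hsdef]; field_simp; ring
      have heq : 2 * (-s * nc) + s ^ 2 * nc * q = s * nc * (-1 - s) := by
        have h5 : s ^ 2 * nc * q = s * nc * (s * q) := by ring
        rw [h5, hsq]; ring
      rw [heq] at this
      nlinarith [mul_pos hspos hpos, hspos]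
    have : nc = 0 := le_antisymm hnc1 hnc0
    exact Complex.normSq_eq_zero.mp this
  · intro h x z
    set r := M (X₀ x) - C x with hr
    have h0 : ∀ w : H, (⟪W r, M w⟫ : ℂ) = 0 := fun w => by
      rw [← adjoint_inner_left, h x, inner_zero_left]
    have h1 : M z - C x = r + M (z - X₀ x) := by
      rw [map_sub, hr]; abel
    rw [h1, map_add, inner_add_left, inner_add_right, inner_add_right]
    have e1 : (⟪W r, M (z - X₀ x)⟫ : ℂ) = 0 := h0 _
    have e2 : (⟪W (M (z - X₀ x)), r⟫ : ℂ) = 0 := by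
      rw [wsym W hW, ← inner_conj_symm, h0, map_zero]
    rw [e1, e2]
    simp only [add_zero, zero_add, Complex.add_re]
    have hd : (0:ℝ) ≤ (⟪W (M (z - X₀ x)), M (z - X₀ x)⟫ : ℂ).re := hW.re_inner_nonneg_left _
    linarith

/-- if `range (A+B)` is closed, `(W, range (A+B))` is compatible and
`A ₋*_W≤ A + B`, then `X₀` is a `W`-inverse of `A + B` in `R(C)` iff it is a `W`-inverse of
`A` in `R(C)` and of `B` in `R(C)`. -/
theorem stmt16 (W A B C X₀ : H →L[ℂ] H) (hW : W.IsPositive)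
    (hAB : IsClosed (LinearMap.range (A + B).toLinearMap : Set H))
    (hcomp : Compatible W (LinearMap.range (A + B).toLinearMap))
    (hlw : LStarW W A (A + B)) :
    WInverseIn W (A + B) C X₀ ↔ WInverseIn W A C X₀ ∧ WInverseIn W B C X₀ := by
  obtain ⟨hsup, -, hker⟩ := hlw
  rw [add_sub_cancel_left] at hsup hker
  -- A* W B = 0 pointwise
  have hABW : ∀ u, adjoint A (W (B u)) = 0 := by
    intro u
    have := hker (LinearMap.mem_range_self (B : H →ₗ[ℂ] H) u)
    simpa using this
  have crossAB : ∀ u v : H, (⟪W (A u), B v⟫ : ℂ) = 0 := by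
    intro u v
    rw [wsym W hW, ← adjoint_inner_right, hABW, inner_zero_right]
  have crossBA : ∀ u v : H, (⟪W (B u), A v⟫ : ℂ) = 0 := by
    intro u v
    rw [← inner_conj_symm, ← wsym W hW, crossAB v u, map_zero]
  rw [winv_char W (A + B) C X₀ hW, winv_char W A C X₀ hW, winv_char W B C X₀ hW]
  constructor
  · intro h
    have hS : ∀ x v : H, (⟪W ((A + B) (X₀ x) - C x), (A + B) v⟫ : ℂ) = 0 := by
      intro x v
      rw [← adjoint_inner_left, h x, inner_zero_left]
    have hSA : ∀ x v : H, (⟪W ((A + B) (X₀ x) - C x), A v⟫ : ℂ) = 0 := by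
      intro x v
      have hmem : A v ∈ LinearMap.range (A + B : H →L[ℂ] H).toLinearMap := by
        rw [hsup]
        exact Submodule.mem_sup_left ⟨v, rfl⟩
      obtain ⟨u, hu⟩ := hmem
      rw [← hu]
      exact hS x u
    have hSB : ∀ x v : H, (⟪W ((A + B) (X₀ x) - C x), B v⟫ : ℂ) = 0 := by
      intro x v
      have hmem : B v ∈ LinearMap.range (A + B : H →L[ℂ] H).toLinearMap := by
        rw [hsup]
        exact Submodule.mem_sup_right ⟨v, rfl⟩
      obtain ⟨u, hu⟩ := hmem
      rw [← hu]
      exact hS x u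
    constructor
    · intro x
      apply ext_inner_right ℂ
      intro v
      rw [adjoint_inner_left, inner_zero_left]
      have hd : A (X₀ x) - C x = ((A + B) (X₀ x) - C x) - B (X₀ x) := by
        simp only [add_apply]; abel
      rw [hd, map_sub, inner_sub_left, hSA x v, crossBA (X₀ x) v, sub_zero]
    · intro x
      apply ext_inner_right ℂ
      intro v
      rw [adjoint_inner_left, inner_zero_left]
      have hd : B (X₀ x) - C x = ((A + B) (X₀ x) - C x) - A (X₀ x) := by
        simp only [add_apply]; abel
      rw [hd, map_sub, inner_sub_left, hSB x v, crossAB (X₀ x) v, sub_zero]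
  · rintro ⟨h1, h2⟩ x
    apply ext_inner_right ℂ
    intro v
    rw [adjoint_inner_left, inner_zero_left]
    have hdA : (A + B) (X₀ x) - C x = (A (X₀ x) - C x) + B (X₀ x) := by
      simp only [add_apply]; abel
    have hdB : (A + B) (X₀ x) - C x = (B (X₀ x) - C x) + A (X₀ x) := by
      simp only [add_apply]; abel
    have hA : (⟪W ((A + B) (X₀ x) - C x), A v⟫ : ℂ) = 0 := by
      rw [hdA, map_add, inner_add_left, crossBA (X₀ x) v, add_zero,
        ← adjoint_inner_left, h1 x, inner_zero_left]
    have hB : (⟪W ((A + B) (X₀ x) - C x), B v⟫ : ℂ) = 0 := by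
      rw [hdB, map_add, inner_add_left, crossAB (X₀ x) v, add_zero,
        ← adjoint_inner_left, h2 x, inner_zero_left]
    have hv : (A + B) v = A v + B v := add_apply A B v
    rw [hv, inner_add_right, hA, hB, add_zero]
end
end
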